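/- Let R > 0, A ∈ ℝ, α₀ ∈ ℝ, ν ∈ ℝ. Let χ : [0, 2πR] → ℂ be twice continuously differentiable with (−i·d/dv + A)²χ = ν·χ on (0, 2πR), χ(0) = χ(2πR), χ′(0) − χ′(2πR) = α₀·χ(0), ∫₀^{2πR} |χ(v)|² dv = 1, and χ(0) ≠ 0. Let ε > 0 and let α : ℝ → ℝ be measurable such that α − α₀ is integrable on ℝ, |α(u) − α₀| ≤ C·|u|^{−1−ε} for some C > 0 and all |u| ≥ 1, and ∫_ℝ (α(u) − α₀) du < 0. Then there exist a > 1, σ ∈ (0,1], and a Schwartz function φ : ℝ → ℝ with |φ| ≤ 1 and φ = 1 on [−a,a], such that the function Ψ(u,v) := φ_σ(u)·χ(v), where φ_σ is the exterior scaling of φ, satisfies ∫_ℝ ∫₀^{2πR} (|∂_uΨ|² + |(−i·∂_v + A)Ψ|²) dv du + ∫_ℝ α(u)·|Ψ(u,0)|² du < ν·∫_ℝ ∫₀^{2πR} |Ψ(u,v)|² dv du (with ∂_uΨ understood as the a.e.-defined derivative of the piecewise-C¹ function φ_σ times χ). -/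

import Mathlib

open Real MeasureTheory

/-- The exterior scaling of a function `φ : ℝ → ℝ`: it coincides with `φ` on
`[−a, a]` and is scaled by `σ` outside. -/
noncomputable def extScaling (a σ : ℝ) (φ : ℝ → ℝ) : ℝ → ℝ := fun x =>
  if |x| ≤ a then φ x
  else if a < x then φ (a + σ * (x - a))
  else φ (-a + σ * (x + a))

lemma exists_schwartz_of_compact_support {f : ℝ → ℝ} (hf : ContDiff ℝ ((⊤ : ℕ∞) : WithTop ℕ∞) f)
    (h : HasCompactSupport f) : ∃ φ : SchwartzMap ℝ ℝ, ⇑φ = f := by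
  refine ⟨⟨f, hf, fun k n => ?_⟩, rfl⟩
  have h1 : HasCompactSupport (fun x : ℝ => ‖iteratedFDeriv ℝ n f x‖) :=
    (h.iteratedFDeriv n).norm
  have h1' : HasCompactSupport (fun x : ℝ => ‖x‖ ^ k * ‖iteratedFDeriv ℝ n f x‖) :=
    h1.mul_left
  have h2 : Continuous fun x : ℝ => ‖x‖ ^ k * ‖iteratedFDeriv ℝ n f x‖ :=
    (continuous_norm.pow k).mul (hf.continuous_iteratedFDeriv (by exact_mod_cast le_top)).norm
  obtain ⟨C, hC⟩ := h2.bounded_above_of_compact_support h1'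
  refine ⟨C, fun x => ?_⟩
  have h3 := hC x
  rw [Real.norm_eq_abs, abs_of_nonneg (by positivity)] at h3
  exact h3

lemma conj_self_mul (z : ℂ) : (starRingEnd ℂ) z * z = ((‖z‖^2 : ℝ) : ℂ) := by
  rw [mul_comm, Complex.mul_conj]; norm_cast
  simp [Complex.normSq_eq_norm_sq]

lemma extScaling_eq_right (a σ : ℝ) (ha1 : 1 < a) (hσ0 : 0 < σ) (hσ1 : σ ≤ 1) (φ : ℝ → ℝ)
    (hφ1 : ∀ u : ℝ, |u| ≤ a → φ u = 1) :
    ∀ u : ℝ, -a ≤ u → extScaling a σ φ u = φ (a + σ * (u - a)) := by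
  intro u hu
  unfold extScaling
  by_cases h : |u| ≤ a
  · rw [if_pos h, hφ1 u h, hφ1]
    rw [abs_le] at h ⊢
    exact ⟨by nlinarith [h.1, h.2], by nlinarith [h.2]⟩
  · have hlt : a < u := by
      rw [abs_le, not_and_or, not_le, not_le] at h
      rcases h with h | h
      · linarith
      · exact h
    rw [if_neg h, if_pos hlt]

lemma extScaling_eq_left (a σ : ℝ) (ha1 : 1 < a) (hσ0 : 0 < σ) (hσ1 : σ ≤ 1) (φ : ℝ → ℝ)
    (hφ1 : ∀ u : ℝ, |u| ≤ a → φ u = 1) :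
    ∀ u : ℝ, u ≤ a → extScaling a σ φ u = φ (-a + σ * (u + a)) := by
  intro u hu
  unfold extScaling
  by_cases h : |u| ≤ a
  · rw [if_pos h, hφ1 u h, hφ1]
    rw [abs_le] at h ⊢
    exact ⟨by nlinarith [h.1], by nlinarith [h.1, h.2]⟩
  · have hlt : u < -a := by
      rw [abs_le, not_and_or, not_le, not_le] at h
      rcases h with h | h
      · exact h
      · linarith
    rw [if_neg h, if_neg (by linarith)]

lemma extScaling_hasDerivAt (a σ : ℝ) (ha1 : 1 < a) (hσ0 : 0 < σ) (hσ1 : σ ≤ 1)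
    (φ : SchwartzMap ℝ ℝ) (hφ1 : ∀ u : ℝ, |u| ≤ a → φ u = 1) :
    ∃ D : ℝ → ℝ, (∀ u, HasDerivAt (extScaling a σ ⇑φ) (D u) u) ∧
      (∀ u, 0 ≤ u → D u = σ * deriv ⇑φ (a + σ * (u - a))) ∧
      (∀ u, u < 0 → D u = σ * deriv ⇑φ (-a + σ * (u + a))) := by
  have ha0 : (0:ℝ) < a := by linarith
  set f := extScaling a σ ⇑φ with hfdef
  have hfeq_right := extScaling_eq_right a σ ha1 hσ0 hσ1 ⇑φ hφ1
  have hfeq_left := extScaling_eq_left a σ ha1 hσ0 hσ1 ⇑φ hφ1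
  have hφder : ∀ y : ℝ, HasDerivAt ⇑φ (deriv ⇑φ y) y := fun y =>
    ((φ.smooth'.differentiable (by simp)) y).hasDerivAt
  have hDr : ∀ u : ℝ, HasDerivAt (fun x => ⇑φ (a + σ * (x - a)))
      (deriv ⇑φ (a + σ * (u - a)) * σ) u := by
    intro u
    have hi : HasDerivAt (fun x : ℝ => a + σ * (x - a)) σ u := by
      have h1 := (((hasDerivAt_id u).sub_const a).const_mul σ).const_add a
      simpa using h1
    exact (hφder _).comp u hi
  have hDl : ∀ u : ℝ, HasDerivAt (fun x => ⇑φ (-a + σ * (x + a)))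
      (deriv ⇑φ (-a + σ * (u + a)) * σ) u := by
    intro u
    have hi : HasDerivAt (fun x : ℝ => -a + σ * (x + a)) σ u := by
      have h1 := (((hasDerivAt_id u).add_const a).const_mul σ).const_add (-a)
      simpa using h1
    exact (hφder _).comp u hi
  refine ⟨fun u => if 0 ≤ u then σ * deriv ⇑φ (a + σ * (u - a))
    else σ * deriv ⇑φ (-a + σ * (u + a)), fun u => ?_, fun u hu => if_pos hu,
    fun u hu => if_neg (not_le.mpr hu)⟩
  rcases le_or_gt 0 u with hu | hu
  · simp only []
    rw [if_pos hu]
    have hev : f =ᶠ[nhds u] (fun x => ⇑φ (a + σ * (x - a))) := by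
      filter_upwards [Ioi_mem_nhds (show -a < u by linarith)] with x hx
      exact hfeq_right x (le_of_lt hx)
    rw [mul_comm]
    exact (hDr u).congr_of_eventuallyEq hev
  · simp only []
    rw [if_neg (not_le.mpr hu)]
    have hev : f =ᶠ[nhds u] (fun x => ⇑φ (-a + σ * (x + a))) := by
      filter_upwards [Iio_mem_nhds (show u < a by linarith)] with x hx
      exact hfeq_left x (le_of_lt hx)
    rw [mul_comm]
    exact (hDl u).congr_of_eventuallyEq hev

lemma transverse_identity
    (L A α₀ ν : ℝ) (hL : 0 < L)
    (χ χ' χ'' : ℝ → ℂ)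
    (hχ' : ∀ v ∈ Set.Icc (0 : ℝ) L, HasDerivWithinAt χ (χ' v) (Set.Icc (0 : ℝ) L) v)
    (hχ'' : ∀ v ∈ Set.Icc (0 : ℝ) L, HasDerivWithinAt χ' (χ'' v) (Set.Icc (0 : ℝ) L) v)
    (hχ''cont : ContinuousOn χ'' (Set.Icc (0 : ℝ) L))
    (heigen : ∀ v ∈ Set.Ioo (0 : ℝ) L,
      -χ'' v - 2 * Complex.I * (A : ℂ) * χ' v + (A : ℂ) ^ 2 * χ v = (ν : ℂ) * χ v)
    (hper : χ 0 = χ L)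
    (hjump : χ' 0 - χ' L = (α₀ : ℂ) * χ 0)
    (hnorm : (∫ v in (0 : ℝ)..L, ‖χ v‖ ^ 2) = 1) :
    (∫ v in (0 : ℝ)..L, ‖-Complex.I * χ' v + (A : ℂ) * χ v‖ ^ 2)
      = ν - α₀ * ‖χ 0‖ ^ 2 := by
  have hIcc : Set.uIcc (0:ℝ) L = Set.Icc 0 L := Set.uIcc_of_le hL.le
  have hχc : ContinuousOn χ (Set.Icc (0:ℝ) L) := fun v hv => (hχ' v hv).continuousWithinAt
  have hχ'c : ContinuousOn χ' (Set.Icc (0:ℝ) L) := fun v hv => (hχ'' v hv).continuousWithinAt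
  have hχconj : ContinuousOn (fun v => (starRingEnd ℂ) (χ v)) (Set.Icc (0:ℝ) L) :=
    Complex.continuous_conj.comp_continuousOn hχc
  have hχ'conj : ContinuousOn (fun v => (starRingEnd ℂ) (χ' v)) (Set.Icc (0:ℝ) L) :=
    Complex.continuous_conj.comp_continuousOn hχ'c
  have hii : ∀ {f : ℝ → ℂ}, ContinuousOn f (Set.Icc (0:ℝ) L) →
      IntervalIntegrable f volume 0 L := fun hf =>
    ContinuousOn.intervalIntegrable (by rwa [hIcc])
  have hder : ∀ v ∈ Set.Ioo (0:ℝ) L, HasDerivAt χ (χ' v) v := fun v hv =>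
    (hχ' v (Set.Ioo_subset_Icc_self hv)).hasDerivAt (Icc_mem_nhds hv.1 hv.2)
  have hder' : ∀ v ∈ Set.Ioo (0:ℝ) L, HasDerivAt χ' (χ'' v) v := fun v hv =>
    (hχ'' v (Set.Ioo_subset_Icc_self hv)).hasDerivAt (Icc_mem_nhds hv.1 hv.2)
  set S := ∫ v in (0:ℝ)..L, (starRingEnd ℂ) (χ v) * χ' v with hS
  set S' := ∫ v in (0:ℝ)..L, (starRingEnd ℂ) (χ' v) * χ v with hS'
  set P := ∫ v in (0:ℝ)..L, (starRingEnd ℂ) (χ' v) * χ' v with hP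
  set Q := ∫ v in (0:ℝ)..L, (starRingEnd ℂ) (χ v) * χ'' v with hQ
  have hIP : IntervalIntegrable (fun v => (starRingEnd ℂ) (χ' v) * χ' v) volume 0 L := hii (hχ'conj.mul hχ'c)
  have hIQ : IntervalIntegrable (fun v => (starRingEnd ℂ) (χ v) * χ'' v) volume 0 L := hii (hχconj.mul hχ''cont)
  have hIS : IntervalIntegrable (fun v => (starRingEnd ℂ) (χ v) * χ' v) volume 0 L := hii (hχconj.mul hχ'c)
  have hIS' : IntervalIntegrable (fun v => (starRingEnd ℂ) (χ' v) * χ v) volume 0 L := hii (hχ'conj.mul hχc)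
  have hI1 : IntervalIntegrable (fun v => (starRingEnd ℂ) (χ v) * χ v) volume 0 L := hii (hχconj.mul hχc)
  -- FTC A
  have ftcA : P + Q = (starRingEnd ℂ) (χ L) * χ' L - (starRingEnd ℂ) (χ 0) * χ' 0 := by
    rw [hP, hQ, ← intervalIntegral.integral_add hIP hIQ]
    apply intervalIntegral.integral_eq_sub_of_hasDeriv_right_of_le hL.le (hχconj.mul hχ'c)
    · intro v hv
      have H := (((hder v hv).star).mul (hder' v hv)).hasDerivWithinAt (s := Set.Ioi v)
      simpa [RCLike.star_def] using H
    · exact hii ((hχ'conj.mul hχ'c).add (hχconj.mul hχ''cont))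
  -- FTC B
  have ftcB : S' + S = 0 := by
    rw [hS', hS, ← intervalIntegral.integral_add hIS' hIS]
    have := intervalIntegral.integral_eq_sub_of_hasDeriv_right_of_le hL.le (hχconj.mul hχc)
      (f' := fun v => (starRingEnd ℂ) (χ' v) * χ v + (starRingEnd ℂ) (χ v) * χ' v)
      (fun v hv => by
        have H := (((hder v hv).star).mul (hder v hv)).hasDerivWithinAt (s := Set.Ioi v)
        simpa [RCLike.star_def] using H)
      (hii ((hχ'conj.mul hχc).add (hχconj.mul hχ'c)))
    rw [this]; simp only [Pi.mul_apply]; rw [← hper]; ring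
  -- norm via conj
  have hone : (∫ v in (0:ℝ)..L, ((starRingEnd ℂ) (χ v) * χ v)) = 1 := by
    simp_rw [conj_self_mul]
    rw [intervalIntegral.integral_ofReal, hnorm]; norm_num
  -- eigen relation
  have heig : -Q - 2 * Complex.I * (A:ℂ) * S + (A:ℂ)^2 = (ν:ℂ) := by
    have h1 : (∫ v in (0:ℝ)..L,
        (starRingEnd ℂ) (χ v) * (-χ'' v - 2 * Complex.I * (A : ℂ) * χ' v + (A : ℂ) ^ 2 * χ v))
        = ∫ v in (0:ℝ)..L, (ν:ℂ) * ((starRingEnd ℂ) (χ v) * χ v) := by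
      rw [intervalIntegral.integral_of_le hL.le, intervalIntegral.integral_of_le hL.le,
        MeasureTheory.integral_Ioc_eq_integral_Ioo, MeasureTheory.integral_Ioc_eq_integral_Ioo]
      apply MeasureTheory.setIntegral_congr_fun measurableSet_Ioo
      intro v hv
      dsimp only
      rw [heigen v hv]; ring
    have h2 : (∫ v in (0:ℝ)..L,
        (starRingEnd ℂ) (χ v) * (-χ'' v - 2 * Complex.I * (A : ℂ) * χ' v + (A : ℂ) ^ 2 * χ v))
        = ∫ v in (0:ℝ)..L, ((-((starRingEnd ℂ) (χ v) * χ'' v)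
            - (2 * Complex.I * (A:ℂ)) * ((starRingEnd ℂ) (χ v) * χ' v))
            + (A:ℂ)^2 * ((starRingEnd ℂ) (χ v) * χ v)) := by
      apply intervalIntegral.integral_congr
      intro v _; dsimp only; ring
    have eA : (∫ v in (0:ℝ)..L, ((-((starRingEnd ℂ) (χ v) * χ'' v)
            - (2 * Complex.I * (A:ℂ)) * ((starRingEnd ℂ) (χ v) * χ' v))
            + (A:ℂ)^2 * ((starRingEnd ℂ) (χ v) * χ v)))
        = (∫ v in (0:ℝ)..L, (-((starRingEnd ℂ) (χ v) * χ'' v)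
            - (2 * Complex.I * (A:ℂ)) * ((starRingEnd ℂ) (χ v) * χ' v)))
          + ∫ v in (0:ℝ)..L, (A:ℂ)^2 * ((starRingEnd ℂ) (χ v) * χ v) :=
      intervalIntegral.integral_add (hIQ.neg.sub (hIS.const_mul _)) (hI1.const_mul _)
    have eB : (∫ v in (0:ℝ)..L, (-((starRingEnd ℂ) (χ v) * χ'' v)
            - (2 * Complex.I * (A:ℂ)) * ((starRingEnd ℂ) (χ v) * χ' v)))
        = (∫ v in (0:ℝ)..L, -((starRingEnd ℂ) (χ v) * χ'' v))
          - ∫ v in (0:ℝ)..L, (2 * Complex.I * (A:ℂ)) * ((starRingEnd ℂ) (χ v) * χ' v) :=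
      intervalIntegral.integral_sub hIQ.neg (hIS.const_mul _)
    have eC : (∫ v in (0:ℝ)..L, -((starRingEnd ℂ) (χ v) * χ'' v)) = -Q :=
      intervalIntegral.integral_neg
    have eD : (∫ v in (0:ℝ)..L, (2 * Complex.I * (A:ℂ)) * ((starRingEnd ℂ) (χ v) * χ' v))
        = (2 * Complex.I * (A:ℂ)) * S := intervalIntegral.integral_const_mul _ _
    have eE : (∫ v in (0:ℝ)..L, (A:ℂ)^2 * ((starRingEnd ℂ) (χ v) * χ v)) = (A:ℂ)^2 * 1 := by
      rw [intervalIntegral.integral_const_mul, hone]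
    have eF : (∫ v in (0:ℝ)..L, (ν:ℂ) * ((starRingEnd ℂ) (χ v) * χ v)) = (ν:ℂ) := by
      rw [intervalIntegral.integral_const_mul, hone, mul_one]
    rw [h2, eA, eB, eC, eD, eE, eF] at h1
    linear_combination h1
  -- boundary value
  have hbd : (starRingEnd ℂ) (χ L) * χ' L - (starRingEnd ℂ) (χ 0) * χ' 0
      = -(α₀:ℂ) * ((‖χ 0‖^2 : ℝ) : ℂ) := by
    rw [← hper, ← conj_self_mul]
    have h3 : χ' L = χ' 0 - (α₀:ℂ) * χ 0 := by rw [← hjump]; ring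
    rw [h3]; ring
  -- target integral complexified
  have hT : ((∫ v in (0 : ℝ)..L, ‖-Complex.I * χ' v + (A : ℂ) * χ v‖ ^ 2 : ℝ) : ℂ)
      = P + Complex.I * (A:ℂ) * S' - Complex.I * (A:ℂ) * S + (A:ℂ)^2 * 1 := by
    rw [← intervalIntegral.integral_ofReal]
    have h4 : (∫ v in (0:ℝ)..L, ((‖-Complex.I * χ' v + (A : ℂ) * χ v‖ ^ 2 : ℝ) : ℂ))
        = ∫ v in (0:ℝ)..L, ((((starRingEnd ℂ) (χ' v) * χ' v
            + (Complex.I * (A:ℂ)) * ((starRingEnd ℂ) (χ' v) * χ v))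
          - (Complex.I * (A:ℂ)) * ((starRingEnd ℂ) (χ v) * χ' v))
          + (A:ℂ)^2 * ((starRingEnd ℂ) (χ v) * χ v)) := by
      apply intervalIntegral.integral_congr
      intro v _; dsimp only
      rw [← conj_self_mul]
      simp only [map_add, map_mul, map_neg, Complex.conj_I, Complex.conj_ofReal]
      linear_combination (-(starRingEnd ℂ) (χ' v) * χ' v) * Complex.I_sq
    have eA : (∫ v in (0:ℝ)..L, ((((starRingEnd ℂ) (χ' v) * χ' v
            + (Complex.I * (A:ℂ)) * ((starRingEnd ℂ) (χ' v) * χ v))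
          - (Complex.I * (A:ℂ)) * ((starRingEnd ℂ) (χ v) * χ' v))
          + (A:ℂ)^2 * ((starRingEnd ℂ) (χ v) * χ v)))
        = (∫ v in (0:ℝ)..L, (((starRingEnd ℂ) (χ' v) * χ' v
            + (Complex.I * (A:ℂ)) * ((starRingEnd ℂ) (χ' v) * χ v))
          - (Complex.I * (A:ℂ)) * ((starRingEnd ℂ) (χ v) * χ' v)))
          + ∫ v in (0:ℝ)..L, (A:ℂ)^2 * ((starRingEnd ℂ) (χ v) * χ v) :=
      intervalIntegral.integral_add
        ((hIP.add (hIS'.const_mul _)).sub (hIS.const_mul _)) (hI1.const_mul _)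
    have eB : (∫ v in (0:ℝ)..L, (((starRingEnd ℂ) (χ' v) * χ' v
            + (Complex.I * (A:ℂ)) * ((starRingEnd ℂ) (χ' v) * χ v))
          - (Complex.I * (A:ℂ)) * ((starRingEnd ℂ) (χ v) * χ' v)))
        = (∫ v in (0:ℝ)..L, ((starRingEnd ℂ) (χ' v) * χ' v
            + (Complex.I * (A:ℂ)) * ((starRingEnd ℂ) (χ' v) * χ v)))
          - ∫ v in (0:ℝ)..L, (Complex.I * (A:ℂ)) * ((starRingEnd ℂ) (χ v) * χ' v) :=
      intervalIntegral.integral_sub (hIP.add (hIS'.const_mul _)) (hIS.const_mul _)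
    have eC : (∫ v in (0:ℝ)..L, ((starRingEnd ℂ) (χ' v) * χ' v
            + (Complex.I * (A:ℂ)) * ((starRingEnd ℂ) (χ' v) * χ v)))
        = P + ∫ v in (0:ℝ)..L, (Complex.I * (A:ℂ)) * ((starRingEnd ℂ) (χ' v) * χ v) :=
      intervalIntegral.integral_add hIP (hIS'.const_mul _)
    have eD : (∫ v in (0:ℝ)..L, (Complex.I * (A:ℂ)) * ((starRingEnd ℂ) (χ' v) * χ v))
        = (Complex.I * (A:ℂ)) * S' := intervalIntegral.integral_const_mul _ _
    have eE : (∫ v in (0:ℝ)..L, (Complex.I * (A:ℂ)) * ((starRingEnd ℂ) (χ v) * χ' v))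
        = (Complex.I * (A:ℂ)) * S := intervalIntegral.integral_const_mul _ _
    have eF : (∫ v in (0:ℝ)..L, (A:ℂ)^2 * ((starRingEnd ℂ) (χ v) * χ v)) = (A:ℂ)^2 * 1 := by
      rw [intervalIntegral.integral_const_mul, hone]
    rw [h4, eA, eB, eC, eD, eE, eF]
  -- combine
  have final : ((∫ v in (0 : ℝ)..L, ‖-Complex.I * χ' v + (A : ℂ) * χ v‖ ^ 2 : ℝ) : ℂ)
      = ((ν - α₀ * ‖χ 0‖ ^ 2 : ℝ) : ℂ) := by
    rw [hT]
    push_cast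
    push_cast at hbd
    linear_combination ftcA + hbd + heig + Complex.I * (A:ℂ) * ftcB
  exact Complex.ofReal_inj.mp final

/-- Variational core of Theorem 5.3: on the Aharonov–Bohm cylinder with a
δ-barrier whose coupling `α` tends to `α₀` with `|α(u) − α₀| = O(|u|^{−1−ε})`
and is attractive in the mean, and with a normalized transverse eigenfunction
`χ` (eigenvalue `ν`, coupling `α₀`) not vanishing at the barrier, the shifted
magnetic quadratic form is negative on the trial function
`Ψ(u,v) = φ_σ(u)χ(v)` for a suitable exterior-scaled Schwartz cutoff. -/
theorem cylinder_trial_function_negative_energy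
    (R A α₀ ν : ℝ) (hR : 0 < R)
    (χ χ' χ'' : ℝ → ℂ)
    (hχ' : ∀ v ∈ Set.Icc (0 : ℝ) (2 * π * R),
      HasDerivWithinAt χ (χ' v) (Set.Icc (0 : ℝ) (2 * π * R)) v)
    (hχ'' : ∀ v ∈ Set.Icc (0 : ℝ) (2 * π * R),
      HasDerivWithinAt χ' (χ'' v) (Set.Icc (0 : ℝ) (2 * π * R)) v)
    (hχ''cont : ContinuousOn χ'' (Set.Icc (0 : ℝ) (2 * π * R)))
    (heigen : ∀ v ∈ Set.Ioo (0 : ℝ) (2 * π * R),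
      -χ'' v - 2 * Complex.I * (A : ℂ) * χ' v + (A : ℂ) ^ 2 * χ v
        = (ν : ℂ) * χ v)
    (hper : χ 0 = χ (2 * π * R))
    (hjump : χ' 0 - χ' (2 * π * R) = (α₀ : ℂ) * χ 0)
    (hnorm : (∫ v in (0 : ℝ)..(2 * π * R), ‖χ v‖ ^ 2) = 1)
    (hχ0 : χ 0 ≠ 0)
    (ε : ℝ) (hε : 0 < ε) (α : ℝ → ℝ) (hαm : Measurable α)
    (hα1 : Integrable (fun u : ℝ => α u - α₀))
    (hαdecay : ∃ C : ℝ, 0 < C ∧ ∀ u : ℝ, 1 ≤ |u| →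
      |α u - α₀| ≤ C * |u| ^ (-1 - ε))
    (hαneg : (∫ u : ℝ, (α u - α₀)) < 0) :
    ∃ (a σ : ℝ) (φ : SchwartzMap ℝ ℝ), 1 < a ∧ 0 < σ ∧ σ ≤ 1 ∧
      (∀ u : ℝ, |φ u| ≤ 1) ∧ (∀ u : ℝ, |u| ≤ a → φ u = 1) ∧
      (∫ u : ℝ, ∫ v in (0 : ℝ)..(2 * π * R),
          ‖(Complex.ofReal (deriv (extScaling a σ ⇑φ) u)) * χ v‖ ^ 2)
        + (∫ u : ℝ, ∫ v in (0 : ℝ)..(2 * π * R),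
            ‖(Complex.ofReal (extScaling a σ ⇑φ u)) *
              (-(Complex.I) * χ' v + (A : ℂ) * χ v)‖ ^ 2)
        + (∫ u : ℝ, α u * ‖(Complex.ofReal (extScaling a σ ⇑φ u)) * χ 0‖ ^ 2)
        < ν * ∫ u : ℝ, ∫ v in (0 : ℝ)..(2 * π * R),
            ‖(Complex.ofReal (extScaling a σ ⇑φ u)) * χ v‖ ^ 2 := by
  clear hαdecay hε hαm
  set L : ℝ := 2 * π * R with hLdef
  have hπ := Real.pi_pos
  have hL : 0 < L := by rw [hLdef]; positivity
  have hT := transverse_identity L A α₀ ν hL χ χ' χ'' hχ' hχ'' hχ''cont heigen hper hjump hnorm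
  have hNpos : (0:ℝ) < ‖χ 0‖^2 := pow_pos (norm_pos_iff.mpr hχ0) 2
  set N : ℝ := ‖χ 0‖^2 with hNdef
  set g : ℝ → ℝ := fun u => α u - α₀ with hgdef
  have hg1 : Integrable g := hα1
  set M : ℝ := ∫ u : ℝ, g u with hMdef
  have hM0 : M < 0 := hαneg
  -- choice of a
  have T1 : Filter.Tendsto (fun r : ℝ => ∫ x in (-r)..r, g x) Filter.atTop (nhds M) :=
    intervalIntegral_tendsto_integral hg1 Filter.tendsto_neg_atTop_atBot Filter.tendsto_id
  have T2 : Filter.Tendsto (fun r : ℝ => ∫ x in (-r)..r, |g x|) Filter.atTop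
      (nhds (∫ u : ℝ, |g u|)) :=
    intervalIntegral_tendsto_integral hg1.abs Filter.tendsto_neg_atTop_atBot Filter.tendsto_id
  have T3 : Filter.Tendsto (fun r : ℝ => (∫ x in (-r)..r, g x)
      + ((∫ u : ℝ, |g u|) - ∫ x in (-r)..r, |g x|)) Filter.atTop (nhds M) := by
    have h := T1.add (Filter.Tendsto.sub (tendsto_const_nhds (x := ∫ u : ℝ, |g u|)) T2)
    simpa using h
  have hev : ∀ᶠ r : ℝ in Filter.atTop, ((∫ x in (-r)..r, g x)
      + ((∫ u : ℝ, |g u|) - ∫ x in (-r)..r, |g x|)) < M / 2 :=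
    T3.eventually_lt tendsto_const_nhds (by linarith)
  obtain ⟨a, haB, ha1⟩ := (hev.and (Filter.eventually_gt_atTop 1)).exists
  set B : ℝ := (∫ x in (-a)..a, g x) + ((∫ u : ℝ, |g u|) - ∫ x in (-a)..a, |g x|) with hBdef
  have hB : B < M / 2 := haB
  have hB0 : B < 0 := by linarith
  have ha0 : (0:ℝ) < a := by linarith
  -- bump function
  set bump : ContDiffBump (0:ℝ) := ⟨a, a+1, ha0, by linarith⟩ with hbump
  obtain ⟨φ, hφeq⟩ := exists_schwartz_of_compact_support
    (bump.contDiff (n := ⊤)) bump.hasCompactSupport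
  have hφ1 : ∀ u : ℝ, |u| ≤ a → φ u = 1 := by
    intro u hu
    rw [hφeq]
    exact bump.one_of_mem_closedBall
      (mem_closedBall_zero_iff.mpr (by rw [Real.norm_eq_abs]; exact hu))
  have hφnn : ∀ u : ℝ, 0 ≤ φ u := fun u => by rw [hφeq]; exact bump.nonneg
  have hφle1 : ∀ u : ℝ, φ u ≤ 1 := fun u => by rw [hφeq]; exact bump.le_one
  have hφle : ∀ u : ℝ, |φ u| ≤ 1 := fun u => abs_le.mpr ⟨by linarith [hφnn u], hφle1 u⟩
  have hφ0 : ∀ y : ℝ, a + 1 ≤ |y| → φ y = 0 := by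
    intro y hy
    rw [hφeq]
    apply Function.notMem_support.mp
    rw [bump.support_eq]
    intro hmem
    rw [mem_ball_zero_iff, Real.norm_eq_abs] at hmem
    have : bump.rOut = a + 1 := rfl
    rw [this] at hmem
    linarith
  have hφd0 : ∀ y : ℝ, |y| ≤ a → deriv ⇑φ y = 0 := by
    intro y hy
    have hmax : IsLocalMax ⇑φ y := by
      apply Filter.Eventually.of_forall
      intro x
      rw [hφ1 y hy]
      exact hφle1 x
    exact hmax.deriv_eq_zero
  have hφd0' : ∀ y : ℝ, a + 1 ≤ |y| → deriv ⇑φ y = 0 := by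
    intro y hy
    have hmin : IsLocalMin ⇑φ y := by
      apply Filter.Eventually.of_forall
      intro x
      rw [hφ0 y hy]
      exact hφnn x
    exact hmin.deriv_eq_zero
  -- choice of σ (called s here)
  set K : ℝ := ∫ y : ℝ, (deriv ⇑φ y)^2 with hKdef
  have hK0 : 0 ≤ K := integral_nonneg fun y => sq_nonneg _
  set c : ℝ := N * (-B) with hcdef
  have hc0 : 0 < c := mul_pos hNpos (by linarith)
  set s : ℝ := min 1 (c / (2*K+1)) with hsdef
  have hs0 : 0 < s := lt_min one_pos (div_pos hc0 (by linarith))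
  have hs1 : s ≤ 1 := min_le_left _ _
  have hsK : s * (2*K) < c := by
    have h1 : s ≤ c / (2*K+1) := min_le_right _ _
    have h2 : s * (2*K+1) ≤ c := by
      rw [← le_div_iff₀ (by linarith : (0:ℝ) < 2*K+1)]
      exact h1
    linarith [hs0, h2]
  refine ⟨a, s, φ, ha1, hs0, hs1, hφle, hφ1, ?_⟩
  -- the trial function
  set f := extScaling a s ⇑φ with hfdef
  obtain ⟨D, hD, hDpos, hDneg⟩ := extScaling_hasDerivAt a s ha1 hs0 hs1 φ hφ1
  have hf_deriv : deriv f = D := funext fun u => (hD u).deriv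
  have hfc : Continuous f := by
    rw [continuous_iff_continuousAt]
    exact fun u => (hD u).differentiableAt.continuousAt
  have hdc : Continuous (deriv ⇑φ) :=
    φ.smooth'.continuous_deriv (by exact_mod_cast le_top)
  have hfeqR := extScaling_eq_right a s ha1 hs0 hs1 ⇑φ hφ1
  have hfeqL := extScaling_eq_left a s ha1 hs0 hs1 ⇑φ hφ1
  have hf1 : ∀ u : ℝ, |u| ≤ a → f u = 1 := by
    intro u hu
    rw [hfdef]
    unfold extScaling
    rw [if_pos hu]
    exact hφ1 u hu
  have hfle : ∀ u : ℝ, |f u| ≤ 1 := by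
    intro u
    rw [hfdef]
    unfold extScaling
    split_ifs <;> exact hφle _
  have hf2bdd : ∀ u : ℝ, (f u)^2 ≤ 1 := fun u => by
    rw [← sq_abs]
    exact pow_le_one₀ (abs_nonneg _) (hfle u)
  -- continuity of D
  have hcont_r : Continuous (fun u : ℝ => s * deriv ⇑φ (a + s * (u - a))) :=
    continuous_const.mul (hdc.comp (continuous_const.add (continuous_const.mul (continuous_id.sub continuous_const))))
  have hcont_l : Continuous (fun u : ℝ => s * deriv ⇑φ (-a + s * (u + a))) :=
    continuous_const.mul (hdc.comp (continuous_const.add (continuous_const.mul (continuous_id.add continuous_const))))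
  have hDeq : D = fun u : ℝ => if (0:ℝ) ≤ u then s * deriv ⇑φ (a + s * (u - a))
      else s * deriv ⇑φ (-a + s * (u + a)) := by
    funext u
    rcases le_or_gt 0 u with hu | hu
    · rw [hDpos u hu, if_pos hu]
    · rw [hDneg u hu, if_neg (not_le.mpr hu)]
  have hDc : Continuous D := by
    rw [hDeq]
    apply Continuous.if_le hcont_r hcont_l continuous_const continuous_id
    intro x hx
    have hx0 : x = 0 := hx.symm
    subst hx0
    have hsa : s * a ≤ a := by
      calc s * a ≤ 1 * a := mul_le_mul_of_nonneg_right hs1 ha0.le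
        _ = a := one_mul a
    have hsa0 : 0 ≤ s * a := mul_nonneg hs0.le ha0.le
    rw [hφd0 (a + s * ((0:ℝ) - a)) (by rw [abs_of_nonneg (by linarith)]; linarith),
        hφd0 (-a + s * ((0:ℝ) + a)) (by rw [abs_of_nonpos (by linarith)]; linarith)]
  -- supports
  have hσinv : s * (1/s) = 1 := by field_simp
  have h1s : 0 < 1/s := by positivity
  set b : ℝ := a + 1/s with hbdef2
  have hb0 : 0 < b := by rw [hbdef2]; linarith
  have hfsupp : ∀ u : ℝ, b ≤ |u| → f u = 0 := by
    intro u hu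
    rcases le_abs.mp hu with h | h
    · rw [hfdef, hfeqR u (by linarith)]
      apply hφ0
      have h1 : 1 ≤ s * (u - a) := by
        have := mul_le_mul_of_nonneg_left (show 1/s ≤ u - a by rw [hbdef2] at h; linarith) hs0.le
        rwa [hσinv] at this
      rw [abs_of_nonneg (by linarith)]
      linarith
    · rw [hfdef, hfeqL u (by linarith)]
      apply hφ0
      have h1 : s * (u + a) ≤ -1 := by
        have := mul_le_mul_of_nonneg_left
          (show u + a ≤ -(1/s) by rw [hbdef2] at h; linarith) hs0.le
        rw [mul_neg, hσinv] at this
        linarith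
      rw [abs_of_nonpos (by linarith)]
      linarith
  have hDsupp : ∀ u : ℝ, b ≤ |u| → D u = 0 := by
    intro u hu
    rcases le_abs.mp hu with h | h
    · rw [hDpos u (by linarith)]
      have h1 : 1 ≤ s * (u - a) := by
        have := mul_le_mul_of_nonneg_left (show 1/s ≤ u - a by rw [hbdef2] at h; linarith) hs0.le
        rwa [hσinv] at this
      rw [hφd0' _ (by rw [abs_of_nonneg (by linarith)]; linarith), mul_zero]
    · rw [hDneg u (by rw [hbdef2] at h; linarith)]
      have h1 : s * (u + a) ≤ -1 := by
        have := mul_le_mul_of_nonneg_left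
          (show u + a ≤ -(1/s) by rw [hbdef2] at h; linarith) hs0.le
        rw [mul_neg, hσinv] at this
        linarith
      rw [hφd0' _ (by rw [abs_of_nonpos (by linarith)]; linarith), mul_zero]
  have habs_of_not_mem : ∀ x : ℝ, x ∉ Set.Icc (-b) b → b ≤ |x| := by
    intro x hx
    rw [Set.mem_Icc, not_and_or, not_le, not_le] at hx
    rcases hx with h | h
    · exact le_abs.mpr (Or.inr (by linarith))
    · exact le_abs.mpr (Or.inl h.le)
  -- integrability
  have hD2int : Integrable (fun u : ℝ => (D u)^2) :=
    (hDc.pow 2).integrable_of_hasCompactSupport (HasCompactSupport.intro isCompact_Icc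
      (fun x hx => by rw [Pi.pow_apply, hDsupp x (habs_of_not_mem x hx)]; norm_num))
  have hf2int : Integrable (fun u : ℝ => (f u)^2) :=
    (hfc.pow 2).integrable_of_hasCompactSupport (HasCompactSupport.intro isCompact_Icc
      (fun x hx => by rw [Pi.pow_apply, hfsupp x (habs_of_not_mem x hx)]; norm_num))
  have hintr : Integrable (fun u : ℝ => (s * deriv ⇑φ (a + s * (u - a)))^2) := by
    apply Continuous.integrable_of_hasCompactSupport (hcont_r.pow 2)
    apply HasCompactSupport.intro (isCompact_Icc (a := a - (2*a+1)/s) (b := a + (2*a+1)/s))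
    intro x hx
    have hgt : (2*a+1)/s < |x - a| := by
      rw [Set.mem_Icc, not_and_or, not_le, not_le] at hx
      rcases hx with h | h
      · exact lt_abs.mpr (Or.inr (by linarith))
      · exact lt_abs.mpr (Or.inl (by linarith))
    have h2 : 2*a+1 < s * |x - a| := by
      have := (div_lt_iff₀ hs0).mp hgt
      linarith [this]
    have h3 : a + 1 ≤ |a + s * (x - a)| := by
      have h4 : |s * (x - a)| ≤ |a + s * (x - a)| + |(-a : ℝ)| := by
        have he : |s * (x - a)| = |(a + s * (x - a)) + (-a)| := congrArg abs (by ring)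
        rw [he]
        exact abs_add_le _ _
      rw [abs_neg, abs_of_pos ha0, abs_mul, abs_of_pos hs0] at h4
      linarith
    simp only [Pi.pow_apply]
    rw [hφd0' _ h3]
    norm_num
  have hintl : Integrable (fun u : ℝ => (s * deriv ⇑φ (-a + s * (u + a)))^2) := by
    apply Continuous.integrable_of_hasCompactSupport (hcont_l.pow 2)
    apply HasCompactSupport.intro (isCompact_Icc (a := -a - (2*a+1)/s) (b := -a + (2*a+1)/s))
    intro x hx
    have hgt : (2*a+1)/s < |x + a| := by
      rw [Set.mem_Icc, not_and_or, not_le, not_le] at hx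
      rcases hx with h | h
      · exact lt_abs.mpr (Or.inr (by linarith))
      · exact lt_abs.mpr (Or.inl (by linarith))
    have h2 : 2*a+1 < s * |x + a| := by
      have := (div_lt_iff₀ hs0).mp hgt
      linarith [this]
    have h3 : a + 1 ≤ |-a + s * (x + a)| := by
      have h4 : |s * (x + a)| ≤ |-a + s * (x + a)| + |(a : ℝ)| := by
        have he : |s * (x + a)| = |(-a + s * (x + a)) + a| := congrArg abs (by ring)
        rw [he]
        exact abs_add_le _ _
      rw [abs_of_pos ha0, abs_mul, abs_of_pos hs0] at h4
      linarith
    simp only [Pi.pow_apply]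
    rw [hφd0' _ h3]
    norm_num
  -- scaling computation
  have hscale_r : (∫ u : ℝ, (s * deriv ⇑φ (a + s * (u - a)))^2) = s * K := by
    have h1 : (∫ u : ℝ, (s * deriv ⇑φ (a + s * (u - a)))^2)
        = ∫ u : ℝ, s^2 * ((fun y : ℝ => (deriv ⇑φ (y + (a - s*a)))^2) (s * u)) := by
      congr 1
      funext u
      dsimp only
      rw [show s * u + (a - s*a) = a + s * (u - a) by ring]
      ring
    rw [h1, integral_const_mul,
      Measure.integral_comp_mul_left (fun y : ℝ => (deriv ⇑φ (y + (a - s*a)))^2) s,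
      integral_add_right_eq_self (fun y : ℝ => (deriv ⇑φ y)^2) (a - s*a),
      ← hKdef, smul_eq_mul, abs_of_pos (inv_pos.mpr hs0)]
    field_simp
  have hscale_l : (∫ u : ℝ, (s * deriv ⇑φ (-a + s * (u + a)))^2) = s * K := by
    have h1 : (∫ u : ℝ, (s * deriv ⇑φ (-a + s * (u + a)))^2)
        = ∫ u : ℝ, s^2 * ((fun y : ℝ => (deriv ⇑φ (y + (-a + s*a)))^2) (s * u)) := by
      congr 1
      funext u
      dsimp only
      rw [show s * u + (-a + s*a) = -a + s * (u + a) by ring]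
      ring
    rw [h1, integral_const_mul,
      Measure.integral_comp_mul_left (fun y : ℝ => (deriv ⇑φ (y + (-a + s*a)))^2) s,
      integral_add_right_eq_self (fun y : ℝ => (deriv ⇑φ y)^2) (-a + s*a),
      ← hKdef, smul_eq_mul, abs_of_pos (inv_pos.mpr hs0)]
    field_simp
  -- kinetic estimate
  have hE1 : (∫ u : ℝ, (D u)^2) ≤ s * (2*K) := by
    have hsplit : (∫ u in Set.Ici (0:ℝ), (D u)^2) + (∫ u in (Set.Ici (0:ℝ))ᶜ, (D u)^2)
        = ∫ u : ℝ, (D u)^2 := integral_add_compl measurableSet_Ici hD2int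
    have hIci : (∫ u in Set.Ici (0:ℝ), (D u)^2) ≤ s * K := by
      rw [setIntegral_congr_fun measurableSet_Ici
        (g := fun u => (s * deriv ⇑φ (a + s * (u - a)))^2)
        (fun u hu => by rw [hDpos u hu])]
      calc (∫ u in Set.Ici (0:ℝ), (s * deriv ⇑φ (a + s * (u - a)))^2)
          ≤ ∫ u : ℝ, (s * deriv ⇑φ (a + s * (u - a)))^2 :=
            setIntegral_le_integral hintr (Filter.Eventually.of_forall fun u => sq_nonneg _)
        _ = s * K := hscale_r
    have hIio : (∫ u in (Set.Ici (0:ℝ))ᶜ, (D u)^2) ≤ s * K := by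
      rw [Set.compl_Ici, setIntegral_congr_fun measurableSet_Iio
        (g := fun u => (s * deriv ⇑φ (-a + s * (u + a)))^2)
        (fun u hu => by rw [hDneg u hu])]
      calc (∫ u in Set.Iio (0:ℝ), (s * deriv ⇑φ (-a + s * (u + a)))^2)
          ≤ ∫ u : ℝ, (s * deriv ⇑φ (-a + s * (u + a)))^2 :=
            setIntegral_le_integral hintl (Filter.Eventually.of_forall fun u => sq_nonneg _)
        _ = s * K := hscale_l
    linarith
  -- potential estimate
  have hf2m : AEStronglyMeasurable (fun u : ℝ => (f u)^2) volume :=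
    (hfc.pow 2).aestronglyMeasurable
  have hgf2 : Integrable (fun u : ℝ => g u * (f u)^2) := by
    have h := hα1.bdd_mul (c := 1) hf2m (Filter.Eventually.of_forall fun u => by
      rw [Real.norm_eq_abs, abs_of_nonneg (sq_nonneg _)]
      exact hf2bdd u)
    exact h.congr (Filter.Eventually.of_forall fun u => mul_comm _ _)
  have hE3 : (∫ u : ℝ, g u * (f u)^2) ≤ B := by
    have hsplit := integral_add_compl (measurableSet_Ioc (a := -a) (b := a)) hgf2
    have h1 : (∫ u in Set.Ioc (-a) a, g u * (f u)^2) = ∫ x in (-a)..a, g x := by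
      rw [intervalIntegral.integral_of_le (by linarith : -a ≤ a)]
      apply setIntegral_congr_fun measurableSet_Ioc
      intro u hu
      have hua : |u| ≤ a := abs_le.mpr ⟨hu.1.le, hu.2⟩
      simp [hf1 u hua]
    have h2 : (∫ u in (Set.Ioc (-a) a)ᶜ, g u * (f u)^2)
        ≤ ∫ u in (Set.Ioc (-a) a)ᶜ, |g u| := by
      apply setIntegral_mono_on hgf2.integrableOn hg1.abs.integrableOn
        measurableSet_Ioc.compl
      intro u _
      calc g u * (f u)^2 ≤ |g u| * (f u)^2 :=
            mul_le_mul_of_nonneg_right (le_abs_self _) (sq_nonneg _)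
        _ ≤ |g u| * 1 := mul_le_mul_of_nonneg_left (hf2bdd u) (abs_nonneg _)
        _ = |g u| := mul_one _
    have h3 : (∫ u in (Set.Ioc (-a) a)ᶜ, |g u|)
        = (∫ u : ℝ, |g u|) - ∫ x in (-a)..a, |g x| := by
      have h4 := integral_add_compl (measurableSet_Ioc (a := -a) (b := a)) hg1.abs
      rw [intervalIntegral.integral_of_le (by linarith : -a ≤ a)]
      linarith
    rw [hBdef]
    linarith
  -- inner integrals
  have hinner1 : ∀ cc : ℝ, (∫ v in (0:ℝ)..L, ‖(cc:ℂ) * χ v‖^2) = cc^2 := by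
    intro cc
    have hpt : ∀ v : ℝ, ‖(cc:ℂ) * χ v‖^2 = cc^2 * ‖χ v‖^2 := fun v => by
      rw [norm_mul, mul_pow, Complex.norm_real, Real.norm_eq_abs, sq_abs]
    simp_rw [hpt]
    rw [intervalIntegral.integral_const_mul, hnorm, mul_one]
  have hinner2 : ∀ cc : ℝ, (∫ v in (0:ℝ)..L,
      ‖(cc:ℂ) * (-Complex.I * χ' v + (A:ℂ) * χ v)‖^2) = cc^2 * (ν - α₀ * N) := by
    intro cc
    have hpt : ∀ v : ℝ, ‖(cc:ℂ) * (-Complex.I * χ' v + (A:ℂ) * χ v)‖^2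
        = cc^2 * ‖-Complex.I * χ' v + (A:ℂ) * χ v‖^2 := fun v => by
      rw [norm_mul, mul_pow, Complex.norm_real, Real.norm_eq_abs, sq_abs]
    simp_rw [hpt]
    rw [intervalIntegral.integral_const_mul, hT, hNdef]
  have hinner3 : ∀ cc : ℝ, ‖(cc:ℂ) * χ 0‖^2 = cc^2 * N := fun cc => by
    rw [norm_mul, mul_pow, Complex.norm_real, Real.norm_eq_abs, sq_abs, hNdef]
  -- rewrite the goal
  rw [hf_deriv]
  simp only [hinner1, hinner2, hinner3]
  have h2nd : (∫ u : ℝ, (f u)^2 * (ν - α₀ * N)) = (∫ u : ℝ, (f u)^2) * (ν - α₀ * N) :=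
    integral_mul_const _ _
  have h3rd : (∫ u : ℝ, α u * ((f u)^2 * N))
      = (∫ u : ℝ, g u * (f u)^2) * N + α₀ * ((∫ u : ℝ, (f u)^2) * N) := by
    have hsum : (∫ u : ℝ, α u * ((f u)^2 * N))
        = ∫ u : ℝ, ((g u * (f u)^2) * N + α₀ * ((f u)^2 * N)) := by
      congr 1
      funext u
      rw [hgdef]
      ring
    rw [hsum, integral_add ((hgf2.mul_const _)) (((hf2int.mul_const _)).const_mul _),
      integral_mul_const, integral_const_mul, integral_mul_const]
  rw [h2nd, h3rd]
  -- final arithmetic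
  have hIGN : (∫ u : ℝ, g u * (f u)^2) * N ≤ B * N :=
    mul_le_mul_of_nonneg_right hE3 hNpos.le
  have hkey : (∫ u : ℝ, (D u)^2) + (∫ u : ℝ, g u * (f u)^2) * N < 0 := by
    have h5 : s * (2*K) < N * (-B) := by rw [← hcdef]; exact hsK
    linarith [hE1, hIGN, h5]
  linarith [hkey]
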